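/- Let δ, γ ∈ (−1, +∞) and let h : [0,∞) → ℝ be continuous with 0 ≤ h(x) ≤ 1 for all x ≥ 0. Then the limit F(+∞; h) := lim_{x→+∞} F(x; h) exists and satisfies F(+∞; h) ≥ 1/M₂(δ,γ) > 0, where M₂(δ,γ) := 2·max(1,1+δ)·max(1,1+γ)^{1/2} / (√π·min(1,1+δ)^{1/2}). -/

import Mathlib

open Real Filter Set MeasureTheory

/-- `F(x; h)` from the paper. -/
noncomputable def Fint (δ γ : ℝ) (h : ℝ → ℝ) (x : ℝ) : ℝ :=
  ∫ w in (0:ℝ)..x,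
    Real.exp (-(∫ z in (0:ℝ)..w, 2*z*(1+γ*h z)/(1+δ*h z))) * (1/(1+δ*h w))

/-- The constant `M₂(δ,γ)` from the paper. -/
noncomputable def M2 (δ γ : ℝ) : ℝ :=
  2 * (max 1 (1+δ)) * (max 1 (1+γ)) ^ ((1:ℝ)/2) /
    (Real.sqrt π * (min 1 (1+δ)) ^ ((1:ℝ)/2))

theorem F_limit_exists_and_bounded_below (δ γ : ℝ) (hδ : -1 < δ) (hγ : -1 < γ)
    (h : ℝ → ℝ) (hcont : ContinuousOn h (Set.Ici 0))
    (hb : ∀ x ≥ (0:ℝ), 0 ≤ h x ∧ h x ≤ 1) :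
    ∃ L : ℝ, Tendsto (Fint δ γ h) atTop (nhds L) ∧
      1 / M2 δ γ ≤ L ∧ 0 < 1 / M2 δ γ := by
  have hδ0 : (0:ℝ) < 1 + δ := by linarith
  have hγ0 : (0:ℝ) < 1 + γ := by linarith
  -- extend h continuously to all of ℝ
  set h' : ℝ → ℝ := fun x => h (max x 0) with hh'
  have hcont' : Continuous h' :=
    hcont.comp_continuous (continuous_id.max continuous_const) (fun x => le_max_right x 0)
  have hb' : ∀ x, 0 ≤ h' x ∧ h' x ≤ 1 := fun x => hb _ (le_max_right x 0)
  set mδ := min 1 (1+δ) with hmδdef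
  set Mδ := max 1 (1+δ) with hMδdef
  set mγ := min 1 (1+γ) with hmγdef
  set Mγ := max 1 (1+γ) with hMγdef
  have hmδ : 0 < mδ := lt_min one_pos hδ0
  have hMδ : 0 < Mδ := lt_of_lt_of_le one_pos (le_max_left _ _)
  have hmγ : 0 < mγ := lt_min one_pos hγ0
  have hMγ : 0 < Mγ := lt_of_lt_of_le one_pos (le_max_left _ _)
  have keyδ : ∀ x, mδ ≤ 1 + δ * h' x ∧ 1 + δ * h' x ≤ Mδ := by
    intro x
    obtain ⟨h0, h1⟩ := hb' x
    constructor
    · rcases le_total δ 0 with hd | hd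
      · exact le_trans (min_le_right _ _) (by nlinarith)
      · exact le_trans (min_le_left _ _) (by nlinarith)
    · rcases le_total δ 0 with hd | hd
      · exact le_trans (by nlinarith) (le_max_left _ _)
      · exact le_trans (by nlinarith) (le_max_right _ _)
  have keyγ : ∀ x, mγ ≤ 1 + γ * h' x ∧ 1 + γ * h' x ≤ Mγ := by
    intro x
    obtain ⟨h0, h1⟩ := hb' x
    constructor
    · rcases le_total γ 0 with hd | hd
      · exact le_trans (min_le_right _ _) (by nlinarith)
      · exact le_trans (min_le_left _ _) (by nlinarith)
    · rcases le_total γ 0 with hd | hd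
      · exact le_trans (by nlinarith) (le_max_left _ _)
      · exact le_trans (by nlinarith) (le_max_right _ _)
  have hdpos : ∀ x, 0 < 1 + δ * h' x := fun x => lt_of_lt_of_le hmδ (keyδ x).1
  have hne : ∀ x, 1 + δ * h' x ≠ 0 := fun x => ne_of_gt (hdpos x)
  set i : ℝ → ℝ := fun z => 2*z*(1+γ*h' z)/(1+δ*h' z) with hidef
  have hconti : Continuous i := by
    apply Continuous.div
    · exact (continuous_const.mul continuous_id).mul
        (continuous_const.add (continuous_const.mul hcont'))
    · exact continuous_const.add (continuous_const.mul hcont')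
    · exact hne
  set a := Mγ / mδ with hadef
  set b := mγ / Mδ with hbdef
  have ha : 0 < a := div_pos hMγ hmδ
  have hbpos : 0 < b := div_pos hmγ hMδ
  have hratio_le : ∀ z, (1+γ*h' z)/(1+δ*h' z) ≤ a :=
    fun z => div_le_div₀ hMγ.le (keyγ z).2 hmδ (keyδ z).1
  have hratio_ge : ∀ z, b ≤ (1+γ*h' z)/(1+δ*h' z) :=
    fun z => div_le_div₀ (lt_of_lt_of_le hmγ (keyγ z).1).le (keyγ z).1 (hdpos z) (keyδ z).2
  have hi_le : ∀ z, 0 ≤ z → i z ≤ 2*a*z := by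
    intro z hz
    have h1 : i z = (2*z) * ((1+γ*h' z)/(1+δ*h' z)) := by rw [hidef]; ring
    have h2 : (2*z) * ((1+γ*h' z)/(1+δ*h' z)) ≤ (2*z) * a :=
      mul_le_mul_of_nonneg_left (hratio_le z) (by linarith)
    rw [h1]; linarith
  have hi_ge : ∀ z, 0 ≤ z → 2*b*z ≤ i z := by
    intro z hz
    have h1 : i z = (2*z) * ((1+γ*h' z)/(1+δ*h' z)) := by rw [hidef]; ring
    have h2 : (2*z) * b ≤ (2*z) * ((1+γ*h' z)/(1+δ*h' z)) :=
      mul_le_mul_of_nonneg_left (hratio_ge z) (by linarith)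
    rw [h1]; linarith
  set I : ℝ → ℝ := fun w => ∫ z in (0:ℝ)..w, i z with hIdef
  have hcontI : Continuous I :=
    intervalIntegral.continuous_primitive (fun a b => hconti.intervalIntegrable a b) 0
  have hI_le : ∀ w, 0 ≤ w → I w ≤ a * w^2 := by
    intro w hw
    have h1 : I w ≤ ∫ z in (0:ℝ)..w, 2*a*z := by
      apply intervalIntegral.integral_mono_on hw (hconti.intervalIntegrable _ _)
        ((continuous_const.mul continuous_id).intervalIntegrable _ _)
      exact fun z hz => hi_le z hz.1
    have h2 : (∫ z in (0:ℝ)..w, 2*a*z) = a * w^2 := by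
      have : (∫ z in (0:ℝ)..w, 2*a*z) = (2*a) * ∫ z in (0:ℝ)..w, z := by
        rw [← intervalIntegral.integral_const_mul]
      rw [this, integral_id]; ring
    linarith
  have hI_ge : ∀ w, 0 ≤ w → b * w^2 ≤ I w := by
    intro w hw
    have h1 : (∫ z in (0:ℝ)..w, 2*b*z) ≤ I w := by
      apply intervalIntegral.integral_mono_on hw
        ((continuous_const.mul continuous_id).intervalIntegrable _ _)
        (hconti.intervalIntegrable _ _)
      exact fun z hz => hi_ge z hz.1
    have h2 : (∫ z in (0:ℝ)..w, 2*b*z) = b * w^2 := by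
      have : (∫ z in (0:ℝ)..w, 2*b*z) = (2*b) * ∫ z in (0:ℝ)..w, z := by
        rw [← intervalIntegral.integral_const_mul]
      rw [this, integral_id]; ring
    linarith
  set g : ℝ → ℝ := fun w => Real.exp (-(I w)) * (1/(1+δ*h' w)) with hgdef
  have hcontg : Continuous g :=
    (Real.continuous_exp.comp hcontI.neg).mul
      (continuous_const.div (continuous_const.add (continuous_const.mul hcont')) hne)
  have hgpos : ∀ w, 0 < g w := fun w =>
    mul_pos (Real.exp_pos _) (one_div_pos.mpr (hdpos w))
  have hg_le : ∀ w, 0 ≤ w → g w ≤ Real.exp (-b * w^2) * (1/mδ) := by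
    intro w hw
    have h1 : Real.exp (-(I w)) ≤ Real.exp (-b * w^2) := by
      apply Real.exp_le_exp.mpr
      have := hI_ge w hw; linarith
    have h2 : (1:ℝ)/(1+δ*h' w) ≤ 1/mδ := one_div_le_one_div_of_le hmδ (keyδ w).1
    exact mul_le_mul h1 h2 (one_div_nonneg.mpr (hdpos w).le) (Real.exp_pos _).le
  have hg_ge : ∀ w, 0 ≤ w → Real.exp (-a * w^2) * (1/Mδ) ≤ g w := by
    intro w hw
    have h1 : Real.exp (-a * w^2) ≤ Real.exp (-(I w)) := by
      apply Real.exp_le_exp.mpr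
      have := hI_le w hw; linarith
    have h2 : (1:ℝ)/Mδ ≤ 1/(1+δ*h' w) := one_div_le_one_div_of_le (hdpos w) (keyδ w).2
    exact mul_le_mul h1 h2 (one_div_nonneg.mpr hMδ.le) (Real.exp_pos _).le
  have hgi : IntegrableOn g (Ioi 0) := by
    have hint : IntegrableOn (fun w => Real.exp (-b * w^2) * (1/mδ)) (Ioi 0) :=
      ((integrable_exp_neg_mul_sq hbpos).mul_const _).integrableOn
    apply hint.mono' hcontg.aestronglyMeasurable.restrict
    filter_upwards [ae_restrict_mem measurableSet_Ioi] with w hw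
    rw [Real.norm_eq_abs, abs_of_nonneg (hgpos w).le]
    exact hg_le w (le_of_lt hw)
  set L := ∫ w in Ioi (0:ℝ), g w with hLdef
  refine ⟨L, ?_, ?_, ?_⟩
  · have hT : Tendsto (fun x => ∫ w in (0:ℝ)..x, g w) atTop (nhds L) :=
      intervalIntegral_tendsto_integral_Ioi 0 hgi tendsto_id
    apply hT.congr'
    filter_upwards [eventually_ge_atTop (0:ℝ)] with x hx
    symm
    unfold Fint
    apply intervalIntegral.integral_congr
    intro w hw
    rw [uIcc_of_le hx] at hw
    have hw0 : 0 ≤ w := hw.1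
    have hwe : h w = h' w := by simp [hh', max_eq_left hw0]
    have hIeq : (∫ z in (0:ℝ)..w, 2*z*(1+γ*h z)/(1+δ*h z)) = I w := by
      apply intervalIntegral.integral_congr
      intro z hz
      rw [uIcc_of_le hw0] at hz
      have hze : h z = h' z := by simp [hh', max_eq_left hz.1]
      simp [hidef, hze]
    simp only [hgdef, hIeq, hwe]
  · have hint : IntegrableOn (fun w => Real.exp (-a * w^2) * (1/Mδ)) (Ioi 0) :=
      ((integrable_exp_neg_mul_sq ha).mul_const _).integrableOn
    have hlow : (∫ w in Ioi (0:ℝ), Real.exp (-a * w^2) * (1/Mδ)) ≤ L :=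
      setIntegral_mono_on hint hgi measurableSet_Ioi (fun w hw => hg_ge w (le_of_lt hw))
    have hcalc : (∫ w in Ioi (0:ℝ), Real.exp (-a * w^2) * (1/Mδ))
        = (Real.sqrt (π / a) / 2) * (1/Mδ) := by
      rw [integral_mul_const, integral_gaussian_Ioi]
    have hfinal : (Real.sqrt (π / a) / 2) * (1/Mδ) = 1 / M2 δ γ := by
      have hM2 : M2 δ γ = 2*Mδ*Mγ^((1:ℝ)/2)/(Real.sqrt π * mδ^((1:ℝ)/2)) := rfl
      rw [hM2, ← Real.sqrt_eq_rpow, ← Real.sqrt_eq_rpow, hadef,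
        Real.sqrt_div Real.pi_pos.le, Real.sqrt_div hMγ.le]
      have n1 : Real.sqrt π ≠ 0 := ne_of_gt (Real.sqrt_pos.mpr Real.pi_pos)
      have n2 : Real.sqrt Mγ ≠ 0 := ne_of_gt (Real.sqrt_pos.mpr hMγ)
      have n3 : Real.sqrt mδ ≠ 0 := ne_of_gt (Real.sqrt_pos.mpr hmδ)
      have n4 : Mδ ≠ 0 := ne_of_gt hMδ
      field_simp
    rw [hcalc, hfinal] at hlow
    exact hlow
  · rw [one_div_pos]
    unfold M2
    apply div_pos
    · exact mul_pos (mul_pos two_pos hMδ) (Real.rpow_pos_of_pos hMγ _)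
    · exact mul_pos (Real.sqrt_pos.mpr Real.pi_pos) (Real.rpow_pos_of_pos hmδ _)
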